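/- For every positive integer L and every set S = {a_1, …, a_r} ⊆ {1, …, L−1}, the graph induced by all vertices of the (S, L)-Verifier gadget other than s_1, t_1, e_v, e_w, o_x, o_y (with all arcs among these vertices) admits a path decomposition of width at most 9 whose first bag contains {u, v, w} and whose last bag contains {x, y, z}. -/

import Mathlib

abbrev GateIntV (b : ℕ) := (Fin (2 * b)) ⊕ (Fin 2)

/-- Untyped index of a Gate internal vertex. -/
def gIdx {b : ℕ} : GateIntV b → ℕ ⊕ Fin 2
  | Sum.inl j => Sum.inl (j : ℕ)
  | Sum.inr i => Sum.inr i

/-- Capacities of the arcs inside a Gate gadget, on untyped indices. -/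
def gcapIdx : (ℕ ⊕ Fin 2) → (ℕ ⊕ Fin 2) → ℕ
  | Sum.inl j, Sum.inl j' => if j' = j + 1 then 1 else 0
  | Sum.inr i, Sum.inl j => if i = 0 ∧ j % 2 = 0 then 1 else 0
  | Sum.inl j, Sum.inr i => if i = 1 ∧ j % 2 = 1 then 1 else 0
  | Sum.inr _, Sum.inr _ => 0

/-- Vertices of the `(S, L)`-Verifier gadget for `S = {a 0, …, a (r-1)}`:
core vertices `Sum.inl i` with `0 = u`, `1 = v`, `2 = w`, `3 = x`, `4 = y`,
`5 = z`, `6 = s₁`, `7 = t₁`, `8 = e_v`, `9 = e_w`, `10 = o_x`, `11 = o_y`;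
`Sum.inr (Sum.inl ⟨j, g⟩)` is vertex `g` of the Gate copy `G_j^1` (an
`a j`-Gate) and `Sum.inr (Sum.inr ⟨j, g⟩)` is vertex `g` of the copy `G_j^2`
(an `(L - a j)`-Gate). -/
abbrev VerV (L r : ℕ) (a : Fin r → ℕ) :=
  (Fin 12) ⊕ ((Σ j : Fin r, GateIntV (a j)) ⊕ (Σ j : Fin r, GateIntV (L - a j)))

/-- Arc capacities of the `(S, L)`-Verifier gadget (capacity `0` = no arc). -/
def verCap (L r : ℕ) (a : Fin r → ℕ) : VerV L r a → VerV L r a → ℕ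
  | Sum.inl i, Sum.inl i' =>
      if i = 6 ∧ i' = 0 then r - 1
      else if i = 5 ∧ i' = 7 then r - 1
      else if i = 8 ∧ i' = 1 then L - 1
      else if i = 9 ∧ i' = 2 then L - 1
      else if i = 3 ∧ i' = 10 then L - 1
      else if i = 4 ∧ i' = 11 then L - 1
      else 0
  | Sum.inl i, Sum.inr (Sum.inl ⟨j, g⟩) =>
      (match gIdx g with
      | Sum.inl p => if i = 0 ∧ p = 0 then 1 else 0
      | Sum.inr q => if i = 1 ∧ q = 0 then a j else 0)
  | Sum.inl i, Sum.inr (Sum.inr ⟨j, g⟩) =>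
      (match gIdx g with
      | Sum.inl _ => 0
      | Sum.inr q => if i = 2 ∧ q = 0 then L - a j else 0)
  | Sum.inr (Sum.inl ⟨j, g⟩), Sum.inl i =>
      (match gIdx g with
      | Sum.inl _ => 0
      | Sum.inr q => if q = 1 ∧ i = 3 then a j else 0)
  | Sum.inr (Sum.inr ⟨j, g⟩), Sum.inl i =>
      (match gIdx g with
      | Sum.inl p => if p = 2 * (L - a j) - 1 ∧ i = 5 then 1 else 0
      | Sum.inr q => if q = 1 ∧ i = 4 then L - a j else 0)
  | Sum.inr (Sum.inl ⟨j, g⟩), Sum.inr (Sum.inl ⟨j', g'⟩) =>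
      if (j : ℕ) = (j' : ℕ) then gcapIdx (gIdx g) (gIdx g') else 0
  | Sum.inr (Sum.inl ⟨j, g⟩), Sum.inr (Sum.inr ⟨j', g'⟩) =>
      (match gIdx g, gIdx g' with
      | Sum.inl p, Sum.inl p' =>
          if (j : ℕ) = (j' : ℕ) ∧ p = 2 * (a j) - 1 ∧ p' = 0 then 1 else 0
      | _, _ => 0)
  | Sum.inr (Sum.inr _), Sum.inr (Sum.inl _) => 0
  | Sum.inr (Sum.inr ⟨j, g⟩), Sum.inr (Sum.inr ⟨j', g'⟩) =>
      if (j : ℕ) = (j' : ℕ) then gcapIdx (gIdx g) (gIdx g') else 0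

/-- The vertices of the Verifier gadget other than `s₁, t₁, e_v, e_w, o_x, o_y`:
core vertices `Sum.inl i` with `0 = u`, `1 = v`, `2 = w`, `3 = x`, `4 = y`,
`5 = z`, together with the vertices of the Gate copies. -/
abbrev VerIntV (L r : ℕ) (a : Fin r → ℕ) :=
  (Fin 6) ⊕ ((Σ j : Fin r, GateIntV (a j)) ⊕ (Σ j : Fin r, GateIntV (L - a j)))

/-- Embedding of the internal vertices into the full Verifier gadget. -/
def verEmb (L r : ℕ) (a : Fin r → ℕ) : VerIntV L r a → VerV L r a
  | Sum.inl i => Sum.inl (Fin.castLE (by omega) i)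
  | Sum.inr g => Sum.inr g

/-- A path decomposition of the directed graph on `V` with arc relation `Adj`,
with bags `X 0, …, X r`. -/
def IsPathDecomp {V : Type*} (Adj : V → V → Prop) {r : ℕ}
    (X : Fin (r + 1) → Finset V) : Prop :=
  (∀ v, ∃ i, v ∈ X i) ∧
  (∀ u v, Adj u v → ∃ i, u ∈ X i ∧ v ∈ X i) ∧
  (∀ v (i j k : Fin (r + 1)), i ≤ j → j ≤ k → v ∈ X i → v ∈ X k → v ∈ X j)

namespace VerifierPW

/-- First bag index containing a vertex. -/
def vlo (L : ℕ) {r : ℕ} (a : Fin r → ℕ) : VerIntV L r a → ℕ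
  | Sum.inl _ => 0
  | Sum.inr (Sum.inl ⟨j, Sum.inl k⟩) => (j : ℕ) * (2*L-1) + ((k : ℕ) - 1)
  | Sum.inr (Sum.inl ⟨j, Sum.inr _⟩) => (j : ℕ) * (2*L-1)
  | Sum.inr (Sum.inr ⟨j, Sum.inl k⟩) => (j : ℕ) * (2*L-1) + (2 * a j + (k : ℕ) - 1)
  | Sum.inr (Sum.inr ⟨j, Sum.inr _⟩) => (j : ℕ) * (2*L-1) + (2 * a j - 1)

/-- Last bag index containing a vertex. -/
def vhi (L : ℕ) {r : ℕ} (a : Fin r → ℕ) : VerIntV L r a → ℕ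
  | Sum.inl _ => r * (2*L-1) - 1
  | Sum.inr (Sum.inl ⟨j, Sum.inl k⟩) => (j : ℕ) * (2*L-1) + (k : ℕ)
  | Sum.inr (Sum.inl ⟨j, Sum.inr _⟩) => (j : ℕ) * (2*L-1) + (2 * a j - 2)
  | Sum.inr (Sum.inr ⟨j, Sum.inl k⟩) => (j : ℕ) * (2*L-1) + min (2 * a j + (k : ℕ)) (2*L-2)
  | Sum.inr (Sum.inr ⟨j, Sum.inr _⟩) => (j : ℕ) * (2*L-1) + (2*L-2)

/-- The `t`-th bag. -/
def bag (L : ℕ) {r : ℕ} (a : Fin r → ℕ) (t : ℕ) : Finset (VerIntV L r a) :=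
  Finset.univ.filter (fun v => vlo L a v ≤ t ∧ t ≤ vhi L a v)

lemma mem_bag {L r : ℕ} {a : Fin r → ℕ} {t : ℕ} {v : VerIntV L r a} :
    v ∈ bag L a t ↔ vlo L a v ≤ t ∧ t ≤ vhi L a v := by
  simp [bag]

lemma blk_lt {r P : ℕ} (j : Fin r) {c : ℕ} (hc : c < P) : (j : ℕ) * P + c < r * P := by
  have h1 : (j : ℕ) * P + c < (j : ℕ) * P + P := Nat.add_lt_add_left hc _
  have h2 : (j : ℕ) * P + P = ((j : ℕ) + 1) * P := by ring
  have h3 : ((j : ℕ) + 1) * P ≤ r * P := Nat.mul_le_mul_right _ j.isLt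
  omega

lemma blk_eq {j q s P : ℕ} (hs : s < P) (c : ℕ) (hc : c < P)
    (h1 : j * P ≤ q * P + s) (h2 : q * P + s ≤ j * P + c) : q = j := by
  have e1 : j * P + c < j * P + P := Nat.add_lt_add_left hc _
  have e2 : q * P + s < q * P + P := Nat.add_lt_add_left hs _
  have r1 : j * P + P = (j + 1) * P := by ring
  have r2 : q * P + P = (q + 1) * P := by ring
  have a1 : j * P < (q + 1) * P := by omega
  have a2 : q * P < (j + 1) * P := by omega
  have b1 := Nat.lt_of_mul_lt_mul_right a1
  have b2 := Nat.lt_of_mul_lt_mul_right a2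
  omega

lemma block1 {L r : ℕ} {a : Fin r → ℕ} (ha : ∀ j, 0 < a j ∧ a j < L)
    {q s : ℕ} (hs : s < 2*L-1) {j : Fin r} {g : GateIntV (a j)}
    (hv : (Sum.inr (Sum.inl ⟨j, g⟩) : VerIntV L r a) ∈ bag L a (q*(2*L-1)+s)) :
    q = (j : ℕ) := by
  rw [mem_bag] at hv
  have h1 := (ha j).1
  have h2 := (ha j).2
  rcases g with k | qq <;> simp only [vlo, vhi] at hv
  · have hk := k.isLt
    exact blk_eq hs (2*L-2) (by omega) (by omega) (by omega)
  · exact blk_eq hs (2*L-2) (by omega) (by omega) (by omega)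

lemma block2 {L r : ℕ} {a : Fin r → ℕ} (ha : ∀ j, 0 < a j ∧ a j < L)
    {q s : ℕ} (hs : s < 2*L-1) {j : Fin r} {g : GateIntV (L - a j)}
    (hv : (Sum.inr (Sum.inr ⟨j, g⟩) : VerIntV L r a) ∈ bag L a (q*(2*L-1)+s)) :
    q = (j : ℕ) := by
  rw [mem_bag] at hv
  have h1 := (ha j).1
  have h2 := (ha j).2
  rcases g with k | qq <;> simp only [vlo, vhi] at hv
  · have hk := k.isLt
    exact blk_eq hs (2*L-2) (by omega) (by omega) (by omega)
  · exact blk_eq hs (2*L-2) (by omega) (by omega) (by omega)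

/-- encoding of a vertex into 10 slots, relative to offset `s` inside a block -/
def fenc (L : ℕ) {r : ℕ} (a : Fin r → ℕ) (s : ℕ) : VerIntV L r a → ℕ
  | Sum.inl i => (i : ℕ)
  | Sum.inr (Sum.inl ⟨_, Sum.inl k⟩) => 8 + ((k : ℕ) - s)
  | Sum.inr (Sum.inl ⟨_, Sum.inr qq⟩) => 6 + (qq : ℕ)
  | Sum.inr (Sum.inr ⟨j, Sum.inl k⟩) => 8 + ((2 * a j + (k : ℕ)) - s)
  | Sum.inr (Sum.inr ⟨_, Sum.inr qq⟩) => 6 + (qq : ℕ)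

lemma card_bag_le {L r : ℕ} {a : Fin r → ℕ} (ha : ∀ j, 0 < a j ∧ a j < L)
    {t : ℕ} (ht : t < r * (2*L-1)) : (bag L a t).card ≤ 10 := by
  have hP : 0 < 2*L-1 := by
    rcases Nat.eq_zero_or_pos (2*L-1) with h | h
    · rw [h, Nat.mul_zero] at ht; omega
    · exact h
  obtain ⟨q, s, hs, rfl⟩ : ∃ q s, s < 2*L-1 ∧ t = q*(2*L-1)+s :=
    ⟨t/(2*L-1), t%(2*L-1), Nat.mod_lt _ hP, (Nat.div_add_mod' t (2*L-1)).symm⟩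
  have hcard : (Finset.range 10).card = 10 := Finset.card_range 10
  rw [← hcard]
  apply Finset.card_le_card_of_injOn (fenc L a s)
  · -- maps into range 10
    intro v hv
    rw [Finset.mem_coe] at hv; rw [Finset.mem_coe, Finset.mem_range]
    rcases v with i | (⟨j, k | qq⟩ | ⟨j, k | qq⟩)
    · simp only [fenc]; omega
    · have e := block1 ha hs hv
      rw [mem_bag] at hv
      simp only [vlo, vhi] at hv
      rw [← e] at hv
      simp only [fenc]
      omega
    · simp only [fenc]; omega
    · have e := block2 ha hs hv
      rw [mem_bag] at hv
      simp only [vlo, vhi] at hv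
      rw [← e] at hv
      simp only [fenc]
      omega
    · simp only [fenc]; omega
  · -- injective on the bag
    intro v1 hv1 v2 hv2 hf
    rw [Finset.mem_coe] at hv1 hv2
    rcases v1 with i1 | (⟨j1, k1 | q1⟩ | ⟨j1, k1 | q1⟩) <;>
      rcases v2 with i2 | (⟨j2, k2 | q2⟩ | ⟨j2, k2 | q2⟩) <;>
      simp only [fenc] at hf
    -- (C,C)
    · exact congrArg Sum.inl (Fin.ext hf)
    · exfalso; omega
    · exfalso; omega
    · exfalso; omega
    · exfalso; omega
    -- (G1I, *)
    · exfalso; omega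
    · -- G1I G1I
      have e1 := block1 ha hs hv1
      have e2 := block1 ha hs hv2
      obtain rfl : j1 = j2 := Fin.ext (e1.symm.trans e2)
      rw [mem_bag] at hv1 hv2
      simp only [vlo, vhi] at hv1 hv2
      rw [← e1] at hv1 hv2
      obtain rfl : k1 = k2 := Fin.ext (by omega)
      rfl
    · exfalso; omega
    · -- G1I G2I : impossible together
      exfalso
      have e1 := block1 ha hs hv1
      have e2 := block2 ha hs hv2
      obtain rfl : j1 = j2 := Fin.ext (e1.symm.trans e2)
      rw [mem_bag] at hv1 hv2
      simp only [vlo, vhi] at hv1 hv2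
      rw [← e1] at hv1 hv2
      have hk1 := k1.isLt
      have hk2 := k2.isLt
      have h2 := (ha j1).2
      omega
    · exfalso; omega
    -- (G1R, *)
    · exfalso; omega
    · exfalso; omega
    · -- G1R G1R
      have e1 := block1 ha hs hv1
      have e2 := block1 ha hs hv2
      obtain rfl : j1 = j2 := Fin.ext (e1.symm.trans e2)
      obtain rfl : q1 = q2 := Fin.ext (by omega)
      rfl
    · exfalso; omega
    · -- G1R G2R : impossible together
      exfalso
      have e1 := block1 ha hs hv1
      have e2 := block2 ha hs hv2
      obtain rfl : j1 = j2 := Fin.ext (e1.symm.trans e2)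
      rw [mem_bag] at hv1 hv2
      simp only [vlo, vhi] at hv1 hv2
      rw [← e1] at hv1 hv2
      have h1 := (ha j1).1
      omega
    -- (G2I, *)
    · exfalso; omega
    · -- G2I G1I
      exfalso
      have e1 := block2 ha hs hv1
      have e2 := block1 ha hs hv2
      obtain rfl : j1 = j2 := Fin.ext (e1.symm.trans e2)
      rw [mem_bag] at hv1 hv2
      simp only [vlo, vhi] at hv1 hv2
      rw [← e1] at hv1 hv2
      have hk1 := k1.isLt
      have hk2 := k2.isLt
      have h2 := (ha j1).2
      omega
    · exfalso; omega
    · -- G2I G2I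
      have e1 := block2 ha hs hv1
      have e2 := block2 ha hs hv2
      obtain rfl : j1 = j2 := Fin.ext (e1.symm.trans e2)
      rw [mem_bag] at hv1 hv2
      simp only [vlo, vhi] at hv1 hv2
      rw [← e1] at hv1 hv2
      obtain rfl : k1 = k2 := Fin.ext (by omega)
      rfl
    · exfalso; omega
    -- (G2R, *)
    · exfalso; omega
    · exfalso; omega
    · -- G2R G1R : impossible together
      exfalso
      have e1 := block2 ha hs hv1
      have e2 := block1 ha hs hv2
      obtain rfl : j1 = j2 := Fin.ext (e1.symm.trans e2)
      rw [mem_bag] at hv1 hv2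
      simp only [vlo, vhi] at hv1 hv2
      rw [← e1] at hv1 hv2
      have h1 := (ha j1).1
      omega
    · exfalso; omega
    · -- G2R G2R
      have e1 := block2 ha hs hv1
      have e2 := block2 ha hs hv2
      obtain rfl : j1 = j2 := Fin.ext (e1.symm.trans e2)
      obtain rfl : q1 = q2 := Fin.ext (by omega)
      rfl

lemma vertex_mem {L r : ℕ} {a : Fin r → ℕ} (ha : ∀ j, 0 < a j ∧ a j < L)
    (hr : 0 < r) (hL : 0 < L) (v : VerIntV L r a) :
    ∃ t, t < r * (2*L-1) ∧ v ∈ bag L a t := by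
  have hP : 0 < 2*L-1 := by omega
  have hrP : 0 < r * (2*L-1) := Nat.mul_pos hr hP
  rcases v with i | (⟨j, k | qq⟩ | ⟨j, k | qq⟩)
  · exact ⟨0, hrP, mem_bag.2 (by simp only [vlo, vhi]; omega)⟩
  · have h1 := (ha j).1; have h2 := (ha j).2; have hk := k.isLt
    refine ⟨(j:ℕ)*(2*L-1) + ((k:ℕ) - 1), blk_lt j (by omega), mem_bag.2 ?_⟩
    simp only [vlo, vhi]; omega
  · have h1 := (ha j).1; have h2 := (ha j).2
    have hb := blk_lt (P := 2*L-1) (r := r) j (show (0:ℕ) < 2*L-1 from hP)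
    refine ⟨(j:ℕ)*(2*L-1), by omega, mem_bag.2 ?_⟩
    simp only [vlo, vhi]; omega
  · have h1 := (ha j).1; have h2 := (ha j).2; have hk := k.isLt
    refine ⟨(j:ℕ)*(2*L-1) + (2 * a j + (k:ℕ) - 1), blk_lt j (by omega), mem_bag.2 ?_⟩
    simp only [vlo, vhi]; omega
  · have h1 := (ha j).1; have h2 := (ha j).2
    refine ⟨(j:ℕ)*(2*L-1) + (2 * a j - 1), blk_lt j (by omega), mem_bag.2 ?_⟩
    simp only [vlo, vhi]; omega

lemma arc_mem {L r : ℕ} {a : Fin r → ℕ} (ha : ∀ j, 0 < a j ∧ a j < L) (hL : 0 < L)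
    (u v : VerIntV L r a)
    (h : 0 < verCap L r a (verEmb L r a u) (verEmb L r a v)) :
    ∃ t, t < r * (2*L-1) ∧ u ∈ bag L a t ∧ v ∈ bag L a t := by
  have hP : 0 < 2*L-1 := by omega
  rcases u with i | (⟨j, g⟩ | ⟨j, g⟩) <;> rcases v with i' | (⟨j', g'⟩ | ⟨j', g'⟩)
  · -- core → core : impossible
    exfalso
    simp only [verEmb, verCap, Fin.ext_iff, Fin.coe_castLE] at h
    split_ifs at h <;> omega
  · -- core → G1
    rcases g' with k | qq
    · simp only [verEmb, verCap, gIdx, Fin.ext_iff, Fin.coe_castLE] at h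
      split_ifs at h with hc
      · obtain ⟨hc1, hc2⟩ := hc
        have h1 := (ha j').1; have h2 := (ha j').2
        have hb := blk_lt (P := 2*L-1) (r := r) j' (show (0:ℕ) < 2*L-1 from hP)
        refine ⟨(j':ℕ)*(2*L-1), by omega, mem_bag.2 ?_, mem_bag.2 ?_⟩ <;>
          (simp only [vlo, vhi]; omega)
      · exact absurd h (lt_irrefl 0)
    · simp only [verEmb, verCap, gIdx, Fin.ext_iff, Fin.coe_castLE] at h
      split_ifs at h with hc
      · obtain ⟨hc1, hc2⟩ := hc
        have h1 := (ha j').1; have h2 := (ha j').2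
        have hb := blk_lt (P := 2*L-1) (r := r) j' (show (0:ℕ) < 2*L-1 from hP)
        refine ⟨(j':ℕ)*(2*L-1), by omega, mem_bag.2 ?_, mem_bag.2 ?_⟩ <;>
          (simp only [vlo, vhi]; omega)
      · exact absurd h (lt_irrefl 0)
  · -- core → G2
    rcases g' with k | qq
    · exfalso
      simp only [verEmb, verCap, gIdx] at h
      omega
    · simp only [verEmb, verCap, gIdx, Fin.ext_iff, Fin.coe_castLE] at h
      split_ifs at h with hc
      · obtain ⟨hc1, hc2⟩ := hc
        have h1 := (ha j').1; have h2 := (ha j').2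
        have hb := blk_lt (r := r) j' (show 2 * a j' - 1 < 2*L-1 by omega)
        refine ⟨(j':ℕ)*(2*L-1) + (2 * a j' - 1), by omega, mem_bag.2 ?_, mem_bag.2 ?_⟩ <;>
          (simp only [vlo, vhi]; omega)
      · exact absurd h (lt_irrefl 0)
  · -- G1 → core
    rcases g with k | qq
    · exfalso
      simp only [verEmb, verCap, gIdx] at h
      omega
    · simp only [verEmb, verCap, gIdx, Fin.ext_iff, Fin.coe_castLE] at h
      split_ifs at h with hc
      · obtain ⟨hc1, hc2⟩ := hc
        have h1 := (ha j).1; have h2 := (ha j).2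
        have hb := blk_lt (P := 2*L-1) (r := r) j (show (0:ℕ) < 2*L-1 from hP)
        refine ⟨(j:ℕ)*(2*L-1), by omega, mem_bag.2 ?_, mem_bag.2 ?_⟩ <;>
          (simp only [vlo, vhi]; omega)
      · exact absurd h (lt_irrefl 0)
  · -- G1 → G1
    rcases g with k | qq <;> rcases g' with k' | qq'
    · simp only [verEmb, verCap, gIdx, gcapIdx, Fin.ext_iff, Fin.coe_castLE] at h
      split_ifs at h with hj hc
      · obtain rfl : j = j' := Fin.ext hj
        have h1 := (ha j).1; have h2 := (ha j).2
        have hk1 := k.isLt; have hk2 := k'.isLt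
        have hb := blk_lt (r := r) j (show (k:ℕ) < 2*L-1 by omega)
        refine ⟨(j:ℕ)*(2*L-1) + (k:ℕ), by omega, mem_bag.2 ?_, mem_bag.2 ?_⟩ <;>
          (simp only [vlo, vhi]; omega)
      · exact absurd h (lt_irrefl 0)
      · exact absurd h (lt_irrefl 0)
    · -- p -> w
      simp only [verEmb, verCap, gIdx, gcapIdx, Fin.ext_iff, Fin.coe_castLE] at h
      split_ifs at h with hj hc
      · obtain rfl : j = j' := Fin.ext hj
        obtain ⟨hc1, hc2⟩ := hc
        have h1 := (ha j).1; have h2 := (ha j).2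
        have hk1 := k.isLt
        have hb := blk_lt (r := r) j (show (k:ℕ) - 1 < 2*L-1 by omega)
        refine ⟨(j:ℕ)*(2*L-1) + ((k:ℕ) - 1), by omega, mem_bag.2 ?_, mem_bag.2 ?_⟩ <;>
          (simp only [vlo, vhi]; omega)
      · exact absurd h (lt_irrefl 0)
      · exact absurd h (lt_irrefl 0)
    · -- v -> p
      simp only [verEmb, verCap, gIdx, gcapIdx, Fin.ext_iff, Fin.coe_castLE] at h
      split_ifs at h with hj hc
      · obtain rfl : j = j' := Fin.ext hj
        obtain ⟨hc1, hc2⟩ := hc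
        have h1 := (ha j).1; have h2 := (ha j).2
        have hk2 := k'.isLt
        have hb := blk_lt (r := r) j (show (k':ℕ) < 2*L-1 by omega)
        refine ⟨(j:ℕ)*(2*L-1) + (k':ℕ), by omega, mem_bag.2 ?_, mem_bag.2 ?_⟩ <;>
          (simp only [vlo, vhi]; omega)
      · exact absurd h (lt_irrefl 0)
      · exact absurd h (lt_irrefl 0)
    · exfalso
      simp only [verEmb, verCap, gIdx, gcapIdx] at h
      split_ifs at h <;> omega
  · -- G1 → G2
    rcases g with k | qq <;> rcases g' with k' | qq'
    · simp only [verEmb, verCap, gIdx, Fin.ext_iff, Fin.coe_castLE] at h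
      split_ifs at h with hc
      · obtain ⟨hj, hc1, hc2⟩ := hc
        obtain rfl : j = j' := Fin.ext hj
        have h1 := (ha j).1; have h2 := (ha j).2
        have hk1 := k.isLt; have hk2 := k'.isLt
        have hb := blk_lt (r := r) j (show 2 * a j - 1 < 2*L-1 by omega)
        refine ⟨(j:ℕ)*(2*L-1) + (2 * a j - 1), by omega, mem_bag.2 ?_, mem_bag.2 ?_⟩ <;>
          (simp only [vlo, vhi]; omega)
      · exact absurd h (lt_irrefl 0)
    · exfalso; simp only [verEmb, verCap, gIdx] at h; omega
    · exfalso; simp only [verEmb, verCap, gIdx] at h; omega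
    · exfalso; simp only [verEmb, verCap, gIdx] at h; omega
  · -- G2 → core
    rcases g with k | qq
    · simp only [verEmb, verCap, gIdx, Fin.ext_iff, Fin.coe_castLE] at h
      split_ifs at h with hc
      · obtain ⟨hc1, hc2⟩ := hc
        have h1 := (ha j).1; have h2 := (ha j).2
        have hk1 := k.isLt
        have hb := blk_lt (r := r) j (show 2*L-2 < 2*L-1 by omega)
        refine ⟨(j:ℕ)*(2*L-1) + (2*L-2), by omega, mem_bag.2 ?_, mem_bag.2 ?_⟩ <;>
          (simp only [vlo, vhi]; omega)
      · exact absurd h (lt_irrefl 0)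
    · simp only [verEmb, verCap, gIdx, Fin.ext_iff, Fin.coe_castLE] at h
      split_ifs at h with hc
      · obtain ⟨hc1, hc2⟩ := hc
        have h1 := (ha j).1; have h2 := (ha j).2
        have hb := blk_lt (r := r) j (show 2 * a j - 1 < 2*L-1 by omega)
        refine ⟨(j:ℕ)*(2*L-1) + (2 * a j - 1), by omega, mem_bag.2 ?_, mem_bag.2 ?_⟩ <;>
          (simp only [vlo, vhi]; omega)
      · exact absurd h (lt_irrefl 0)
  · -- G2 → G1 : impossible
    exfalso
    simp only [verEmb, verCap] at h
    omega
  · -- G2 → G2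
    rcases g with k | qq <;> rcases g' with k' | qq'
    · simp only [verEmb, verCap, gIdx, gcapIdx, Fin.ext_iff, Fin.coe_castLE] at h
      split_ifs at h with hj hc
      · obtain rfl : j = j' := Fin.ext hj
        have h1 := (ha j).1; have h2 := (ha j).2
        have hk1 := k.isLt; have hk2 := k'.isLt
        have hb := blk_lt (r := r) j (show 2 * a j + (k:ℕ) < 2*L-1 by omega)
        refine ⟨(j:ℕ)*(2*L-1) + (2 * a j + (k:ℕ)), by omega, mem_bag.2 ?_, mem_bag.2 ?_⟩ <;>
          (simp only [vlo, vhi]; omega)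
      · exact absurd h (lt_irrefl 0)
      · exact absurd h (lt_irrefl 0)
    · -- p -> w
      simp only [verEmb, verCap, gIdx, gcapIdx, Fin.ext_iff, Fin.coe_castLE] at h
      split_ifs at h with hj hc
      · obtain rfl : j = j' := Fin.ext hj
        obtain ⟨hc1, hc2⟩ := hc
        have h1 := (ha j).1; have h2 := (ha j).2
        have hk1 := k.isLt
        have hb := blk_lt (r := r) j (show 2 * a j + (k:ℕ) - 1 < 2*L-1 by omega)
        refine ⟨(j:ℕ)*(2*L-1) + (2 * a j + (k:ℕ) - 1), by omega, mem_bag.2 ?_, mem_bag.2 ?_⟩ <;>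
          (simp only [vlo, vhi]; omega)
      · exact absurd h (lt_irrefl 0)
      · exact absurd h (lt_irrefl 0)
    · -- v -> p
      simp only [verEmb, verCap, gIdx, gcapIdx, Fin.ext_iff, Fin.coe_castLE] at h
      split_ifs at h with hj hc
      · obtain rfl : j = j' := Fin.ext hj
        obtain ⟨hc1, hc2⟩ := hc
        have h1 := (ha j).1; have h2 := (ha j).2
        have hk2 := k'.isLt
        have hb := blk_lt (r := r) j (show 2 * a j + (k':ℕ) < 2*L-1 by omega)
        refine ⟨(j:ℕ)*(2*L-1) + (2 * a j + (k':ℕ)), by omega, mem_bag.2 ?_, mem_bag.2 ?_⟩ <;>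
          (simp only [vlo, vhi]; omega)
      · exact absurd h (lt_irrefl 0)
      · exact absurd h (lt_irrefl 0)
    · exfalso
      simp only [verEmb, verCap, gIdx, gcapIdx] at h
      split_ifs at h <;> omega

end VerifierPW


/-- Lemma 3.7: the internal part of the `(S, L)`-Verifier gadget has a path
decomposition of width 9 with `u, v, w` in the first bag and `x, y, z` in the
last bag. -/
theorem verifier_gadget_pathwidth (L r : ℕ) (hL : 0 < L) (hr : 1 ≤ r)
    (a : Fin r → ℕ) (hinj : Function.Injective a)
    (hrange : ∀ j, 1 ≤ a j ∧ a j ≤ L - 1) :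
    ∃ (m : ℕ) (X : Fin (m + 1) → Finset (VerIntV L r a)),
      IsPathDecomp
        (fun u v => 0 < verCap L r a (verEmb L r a u) (verEmb L r a v)) X ∧
      (∀ i, (X i).card ≤ 9 + 1) ∧
      (Sum.inl 0 : VerIntV L r a) ∈ X 0 ∧
      (Sum.inl 1 : VerIntV L r a) ∈ X 0 ∧
      (Sum.inl 2 : VerIntV L r a) ∈ X 0 ∧
      (Sum.inl 3 : VerIntV L r a) ∈ X (Fin.last m) ∧
      (Sum.inl 4 : VerIntV L r a) ∈ X (Fin.last m) ∧
      (Sum.inl 5 : VerIntV L r a) ∈ X (Fin.last m) := by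
  have hL2 : 2 ≤ L := by
    have g1 := (hrange ⟨0, hr⟩).1
    have g2 := (hrange ⟨0, hr⟩).2
    omega
  have ha : ∀ j, 0 < a j ∧ a j < L := fun j =>
    ⟨(hrange j).1, by have := (hrange j).2; omega⟩
  have hP : 0 < 2*L-1 := by omega
  have hrP : 0 < r * (2*L-1) := Nat.mul_pos hr hP
  refine ⟨r*(2*L-1)-1, fun i => VerifierPW.bag L a i.val,
    ⟨?_, ?_, ?_⟩, ?_, ?_, ?_, ?_, ?_, ?_, ?_⟩
  · intro v
    obtain ⟨t, ht, hm⟩ := VerifierPW.vertex_mem ha hr hL v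
    exact ⟨⟨t, by omega⟩, hm⟩
  · intro u v huv
    obtain ⟨t, ht, h1, h2⟩ := VerifierPW.arc_mem ha hL u v huv
    exact ⟨⟨t, by omega⟩, h1, h2⟩
  · intro v i j k hij hjk hi hk
    rw [VerifierPW.mem_bag] at hi hk ⊢
    have h1 : (i : ℕ) ≤ (j : ℕ) := hij
    have h2 : (j : ℕ) ≤ (k : ℕ) := hjk
    exact ⟨le_trans hi.1 h1, le_trans h2 hk.2⟩
  · intro i
    have hi : (i : ℕ) < r * (2*L-1) := by have := i.isLt; omega
    have hc := VerifierPW.card_bag_le ha hi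
    exact le_trans hc (by norm_num)
  · refine VerifierPW.mem_bag.2 ?_
    simp only [VerifierPW.vlo, VerifierPW.vhi, Fin.val_zero]
    omega
  · refine VerifierPW.mem_bag.2 ?_
    simp only [VerifierPW.vlo, VerifierPW.vhi, Fin.val_zero]
    omega
  · refine VerifierPW.mem_bag.2 ?_
    simp only [VerifierPW.vlo, VerifierPW.vhi, Fin.val_zero]
    omega
  · refine VerifierPW.mem_bag.2 ?_
    simp only [VerifierPW.vlo, VerifierPW.vhi, Fin.val_last]
    omega
  · refine VerifierPW.mem_bag.2 ?_
    simp only [VerifierPW.vlo, VerifierPW.vhi, Fin.val_last]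
    omega
  · refine VerifierPW.mem_bag.2 ?_
    simp only [VerifierPW.vlo, VerifierPW.vhi, Fin.val_last]
    omega
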